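/- Let F = g + h∘c with g proper closed convex, h convex L-Lipschitz, c C¹ with β-Lipschitz Jacobian, and set μ = Lβ. For t > 0 define S_t(x) = argmin_z { g(z) + h(c(x)+∇c(x)(z−x)) + ‖z−x‖²/(2t) } and G_t(x) = t⁻¹(x − S_t(x)). Then for every x, ‖∇F_{t/(1+tμ)}(x)‖ ≤ (1+μt)(1+√(μt)) ‖G_t(x)‖, where F_ν denotes the Moreau envelope of F with parameter ν. -/

import Mathlib

open Set RealInnerProductSpace

section Aux

/-- A lower semicontinuous function attains its minimum on a nonempty compact set. -/
lemma lsc_exists_min {α : Type*} [TopologicalSpace α] {f : α → ℝ}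
    (hf : LowerSemicontinuous f) {s : Set α} (hs : IsCompact s) (hne : s.Nonempty) :
    ∃ x₀ ∈ s, ∀ x ∈ s, f x₀ ≤ f x := by
  by_contra hcon
  push_neg at hcon
  have hcover : s ⊆ ⋃ x : s, f ⁻¹' (Ioi (f x.1)) := by
    intro y hy
    obtain ⟨x, hx, hlt⟩ := hcon y hy
    exact mem_iUnion.2 ⟨⟨x, hx⟩, hlt⟩
  obtain ⟨I, hI⟩ := hs.elim_finite_subcover (fun x : s => f ⁻¹' (Ioi (f x.1)))
    (fun x => hf.isOpen_preimage _) hcover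
  obtain ⟨y, hy⟩ := hne
  have hIne : I.Nonempty := by
    rcases mem_iUnion.1 (hI hy) with ⟨i, hi⟩
    rcases mem_iUnion.1 hi with ⟨hiI, _⟩
    exact ⟨i, hiI⟩
  obtain ⟨j, hjI, hjmin⟩ := I.exists_min_image (fun x : s => f x.1) hIne
  rcases mem_iUnion.1 (hI j.2) with ⟨i, hi⟩
  rcases mem_iUnion.1 hi with ⟨hiI, hlt⟩
  exact absurd (hjmin i hiI) (not_le.2 hlt)

/-- Quadratic Taylor bound for a `C¹` map with Lipschitz derivative. -/
lemma taylor_quadratic {E F : Type*} [NormedAddCommGroup E] [NormedSpace ℝ E]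
    [NormedAddCommGroup F] [NormedSpace ℝ F]
    {c : E → F} (hc : ContDiff ℝ 1 c) {β : ℝ}
    (hcβ : ∀ x y, ‖fderiv ℝ c x - fderiv ℝ c y‖ ≤ β * ‖x - y‖)
    (x z : E) : ‖c z - c x - fderiv ℝ c x (z - x)‖ ≤ β / 2 * ‖z - x‖ ^ 2 := by
  set v := z - x with hv
  set φ : ℝ → F := fun s => c (x + s • v) - c x - s • (fderiv ℝ c x v) with hφ
  have hdiff : ∀ s : ℝ, HasDerivAt φ (fderiv ℝ c (x + s • v) v - fderiv ℝ c x v) s := by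
    intro s
    have h1 : HasDerivAt (fun s : ℝ => x + s • v) v s := by
      simpa using ((hasDerivAt_id s).smul_const v).const_add x
    have h2 : HasFDerivAt c (fderiv ℝ c (x + s • v)) (x + s • v) :=
      (hc.differentiable one_ne_zero (x + s • v)).hasFDerivAt
    have h3 : HasDerivAt (fun s : ℝ => c (x + s • v)) (fderiv ℝ c (x + s • v) v) s :=
      h2.comp_hasDerivAt s h1
    have := (h3.sub_const (c x)).sub ((hasDerivAt_id s).smul_const (fderiv ℝ c x v))
    rw [one_smul] at this
    exact this
  have hbound : ∀ s ∈ Ico (0:ℝ) 1,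
      ‖fderiv ℝ c (x + s • v) v - fderiv ℝ c x v‖ ≤ (β * ‖v‖ ^ 2) * s := by
    intro s hs
    have h1 : ‖fderiv ℝ c (x + s • v) v - fderiv ℝ c x v‖
        ≤ ‖fderiv ℝ c (x + s • v) - fderiv ℝ c x‖ * ‖v‖ := by
      have := (fderiv ℝ c (x + s • v) - fderiv ℝ c x).le_opNorm v
      simpa using this
    have h2 : ‖fderiv ℝ c (x + s • v) - fderiv ℝ c x‖ ≤ β * (s * ‖v‖) := by
      have := hcβ (x + s • v) x
      simpa [norm_smul, abs_of_nonneg hs.1] using this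
    calc ‖fderiv ℝ c (x + s • v) v - fderiv ℝ c x v‖ ≤ (β * (s * ‖v‖)) * ‖v‖ :=
          h1.trans (mul_le_mul_of_nonneg_right h2 (norm_nonneg _))
      _ = (β * ‖v‖ ^ 2) * s := by ring
  have key : ∀ ⦃s : ℝ⦄, s ∈ Icc (0:ℝ) 1 → ‖φ s‖ ≤ (β * ‖v‖ ^ 2) / 2 * s ^ 2 := by
    have hB : ∀ s : ℝ, HasDerivAt (fun s => (β * ‖v‖ ^ 2) / 2 * s ^ 2) ((β * ‖v‖ ^ 2) * s) s := by
      intro s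
      have := ((hasDerivAt_pow 2 s).const_mul ((β * ‖v‖ ^ 2) / 2))
      simpa using this.congr_deriv (by ring)
    refine image_norm_le_of_norm_deriv_right_le_deriv_boundary
      (fun s _ => (hdiff s).continuousAt.continuousWithinAt)
      (fun s _ => (hdiff s).hasDerivWithinAt) ?_ hB ?_
    · simp [hφ]
    · exact hbound
  have h1 : φ 1 = c z - c x - fderiv ℝ c x (z - x) := by simp [hφ, hv]
  have := key (by norm_num : (1:ℝ) ∈ Icc (0:ℝ) 1)
  rw [h1] at this
  calc ‖c z - c x - fderiv ℝ c x (z - x)‖ ≤ (β * ‖v‖ ^ 2) / 2 * 1 ^ 2 := this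
    _ = β / 2 * ‖z - x‖ ^ 2 := by rw [hv]; ring

/-- Interpolation bound: the curve `c` deviates from chords quadratically. -/
lemma c_combo {E F : Type*} [NormedAddCommGroup E] [NormedSpace ℝ E]
    [NormedAddCommGroup F] [NormedSpace ℝ F]
    {c : E → F} (hc : ContDiff ℝ 1 c) {β : ℝ}
    (hcβ : ∀ x y, ‖fderiv ℝ c x - fderiv ℝ c y‖ ≤ β * ‖x - y‖)
    {a b : ℝ} (ha : 0 ≤ a) (hb : 0 ≤ b) (hab : a + b = 1) (z w : E) :
    ‖a • c z + b • c w - c (a • z + b • w)‖ ≤ β / 2 * (a * b) * ‖z - w‖ ^ 2 := by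
  set p := a • z + b • w with hp
  set D := fderiv ℝ c p with hD
  have h1 : ‖c z - c p - D (z - p)‖ ≤ β / 2 * ‖z - p‖ ^ 2 := taylor_quadratic hc hcβ p z
  have h2 : ‖c w - c p - D (w - p)‖ ≤ β / 2 * ‖w - p‖ ^ 2 := taylor_quadratic hc hcβ p w
  have hzp : z - p = b • (z - w) := by rw [hp]; match_scalars <;> linarith
  have hwp : w - p = (-a) • (z - w) := by rw [hp]; match_scalars <;> linarith
  have hsum : a • (z - p) + b • (w - p) = 0 := by
    rw [hzp, hwp]; match_scalars <;> linarith
  have hDsum : a • D (z - p) + b • D (w - p) = 0 := by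
    rw [← map_smul, ← map_smul, ← map_add, hsum, map_zero]
  have hkey : a • c z + b • c w - c p
      = a • (c z - c p - D (z - p)) + b • (c w - c p - D (w - p)) := by
    have hexp : a • (c z - c p - D (z - p)) + b • (c w - c p - D (w - p))
        = (a • c z + b • c w) - (a + b) • c p - (a • D (z - p) + b • D (w - p)) := by
      match_scalars <;> ring
    rw [hexp, hab, one_smul, hDsum, sub_zero]
  have hnzp : ‖z - p‖ ^ 2 = b ^ 2 * ‖z - w‖ ^ 2 := by
    rw [hzp, norm_smul, Real.norm_eq_abs, mul_pow, sq_abs]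
  have hnwp : ‖w - p‖ ^ 2 = a ^ 2 * ‖z - w‖ ^ 2 := by
    rw [hwp, norm_smul, Real.norm_eq_abs, mul_pow, sq_abs, neg_pow]
    ring
  calc ‖a • c z + b • c w - c p‖
      = ‖a • (c z - c p - D (z - p)) + b • (c w - c p - D (w - p))‖ := by rw [hkey]
    _ ≤ ‖a • (c z - c p - D (z - p))‖ + ‖b • (c w - c p - D (w - p))‖ := norm_add_le _ _
    _ = a * ‖c z - c p - D (z - p)‖ + b * ‖c w - c p - D (w - p)‖ := by
        rw [norm_smul, norm_smul, Real.norm_eq_abs, Real.norm_eq_abs,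
          abs_of_nonneg ha, abs_of_nonneg hb]
    _ ≤ a * (β / 2 * ‖z - p‖ ^ 2) + b * (β / 2 * ‖w - p‖ ^ 2) := by
        have := mul_le_mul_of_nonneg_left h1 ha
        have := mul_le_mul_of_nonneg_left h2 hb
        linarith
    _ = β / 2 * (a * b) * ‖z - w‖ ^ 2 := by
        rw [hnzp, hnwp]
        linear_combination (β / 2 * a * b * ‖z - w‖ ^ 2) * hab

lemma norm_combo_sq {E : Type*} [NormedAddCommGroup E] [InnerProductSpace ℝ E]
    (a b : ℝ) (hab : a + b = 1) (z w : E) :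
    ‖a • z + b • w‖ ^ 2 = a * ‖z‖ ^ 2 + b * ‖w‖ ^ 2 - a * b * ‖z - w‖ ^ 2 := by
  rw [norm_add_sq_real, norm_sub_sq_real, norm_smul, norm_smul]
  rw [real_inner_smul_left, real_inner_smul_right]
  simp only [norm_smul, Real.norm_eq_abs, mul_pow, sq_abs]
  linear_combination (a * ‖z‖ ^ 2 + b * ‖w‖ ^ 2) * hab

lemma norm_sub_sq_expand {E : Type*} [NormedAddCommGroup E] [InnerProductSpace ℝ E]
    (u v : E) : ‖u - v‖ ^ 2 = ‖u‖ ^ 2 - 2 * ⟪u, v⟫ + ‖v‖ ^ 2 :=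
  norm_sub_sq_real u v

lemma strong_min {E : Type*} [NormedAddCommGroup E] [InnerProductSpace ℝ E]
    {f : E → ℝ} {α : ℝ} (hα : 0 ≤ α)
    (hconv : ConvexOn ℝ Set.univ (fun z => f z - α / 2 * ‖z‖ ^ 2))
    {xb : E} (hmin : ∀ z, f xb ≤ f z) (z : E) :
    f xb + α / 2 * ‖z - xb‖ ^ 2 ≤ f z := by
  obtain ⟨q, hq⟩ : ∃ q : E → ℝ, q = fun y => f y - α / 2 * ‖y - xb‖ ^ 2 := ⟨_, rfl⟩
  have hqconv : ConvexOn ℝ Set.univ q := by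
    have hlin : ConvexOn ℝ Set.univ
        (fun y : E => α * ⟪y, xb⟫ - α / 2 * ‖xb‖ ^ 2) := by
      refine ⟨convex_univ, fun u _ v _ a b ha hb hab => le_of_eq ?_⟩
      simp only [smul_eq_mul, inner_add_left, real_inner_smul_left]
      linear_combination (α / 2 * ‖xb‖ ^ 2) * hab
    have heq : q = fun y => (f y - α / 2 * ‖y‖ ^ 2)
        + (α * ⟪y, xb⟫ - α / 2 * ‖xb‖ ^ 2) := by
      funext y
      rw [hq]; dsimp only; rw [norm_sub_sq_expand y xb]; ring
    rw [heq]
    exact hconv.add hlin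
  have hkey : ∀ s : ℝ, 0 < s → s ≤ 1 → f xb ≤ q z + α / 2 * s * ‖z - xb‖ ^ 2 := by
    intro s hs hs1
    have hmid : q (s • z + (1 - s) • xb) ≤ s * q z + (1 - s) * q xb :=
      by simpa [smul_eq_mul] using
        hqconv.2 (Set.mem_univ z) (Set.mem_univ xb) hs.le (by linarith : (0:ℝ) ≤ 1 - s) (by ring)
    have hqxb : q xb = f xb := by rw [hq]; simp
    have hnorm : ‖(s • z + (1 - s) • xb) - xb‖ ^ 2 = s ^ 2 * ‖z - xb‖ ^ 2 := by
      have hpt : (s • z + (1 - s) • xb) - xb = s • (z - xb) := by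
        rw [smul_sub, sub_smul, one_smul]; abel
      rw [hpt, norm_smul]
      simp [abs_of_nonneg hs.le, mul_pow]
    have hexp : f (s • z + (1 - s) • xb)
        = q (s • z + (1 - s) • xb) + α / 2 * (s ^ 2 * ‖z - xb‖ ^ 2) := by
      rw [hq]; dsimp only; rw [hnorm]; ring
    have h1 : f xb ≤ s * q z + (1 - s) * f xb + α / 2 * (s ^ 2 * ‖z - xb‖ ^ 2) := by
      calc f xb ≤ f (s • z + (1 - s) • xb) := hmin _
        _ = q (s • z + (1 - s) • xb) + α / 2 * (s ^ 2 * ‖z - xb‖ ^ 2) := hexp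
        _ ≤ s * q z + (1 - s) * q xb + α / 2 * (s ^ 2 * ‖z - xb‖ ^ 2) := by linarith
        _ = s * q z + (1 - s) * f xb + α / 2 * (s ^ 2 * ‖z - xb‖ ^ 2) := by rw [hqxb]
    nlinarith [h1]
  have hlim : f xb ≤ q z := by
    by_contra hcon
    push_neg at hcon
    obtain ⟨ε, hε⟩ : ∃ ε : ℝ, ε = f xb - q z := ⟨_, rfl⟩
    have hεpos : 0 < ε := by linarith
    have hden : (0:ℝ) < α / 2 * ‖z - xb‖ ^ 2 + 1 := by positivity
    obtain ⟨s, hsdef⟩ : ∃ s : ℝ, s = min 1 (ε / (2 * (α / 2 * ‖z - xb‖ ^ 2 + 1))) := ⟨_, rfl⟩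
    have hspos : 0 < s := hsdef ▸ lt_min one_pos (by positivity)
    have hs1 : s ≤ 1 := hsdef ▸ min_le_left _ _
    have hsle : s ≤ ε / (2 * (α / 2 * ‖z - xb‖ ^ 2 + 1)) := hsdef ▸ min_le_right _ _
    have hsle' : s * (2 * (α / 2 * ‖z - xb‖ ^ 2 + 1)) ≤ ε := by
      rw [← le_div_iff₀ (by positivity)]; exact hsle
    have hterm : α / 2 * s * ‖z - xb‖ ^ 2 ≤ ε / 2 := by nlinarith [hspos.le]
    have hfin := hkey s hspos hs1
    linarith
  have hqz : q z = f z - α / 2 * ‖z - xb‖ ^ 2 := by rw [hq]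
  linarith

end Aux

set_option maxHeartbeats 2000000 in
/-- Prox-gradient versus the gradient of the Moreau envelope (first inequality of
Theorem 4.5): for the composite function `F = g + h ∘ c` with `μ = Lβ`, the prox-linear map
`S_t` and prox-gradient `G_t(x) = t⁻¹ (x - S_t x)` satisfy
`‖∇F_{t/(1+tμ)}(x)‖ ≤ (1 + μt)(1 + √(μt)) ‖G_t(x)‖`. -/
theorem envelope_gradient_le_prox_gradient {d m : ℕ}
    (g : EuclideanSpace ℝ (Fin d) → ℝ)
    (h : EuclideanSpace ℝ (Fin m) → ℝ)
    (c : EuclideanSpace ℝ (Fin d) → EuclideanSpace ℝ (Fin m))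
    (L β t : ℝ) (hL : 0 ≤ L) (hβ : 0 ≤ β) (ht : 0 < t)
    (hg : ConvexOn ℝ Set.univ g) (hgc : LowerSemicontinuous g)
    (hh : ConvexOn ℝ Set.univ h)
    (hhL : ∀ u v, |h u - h v| ≤ L * ‖u - v‖)
    (hc : ContDiff ℝ 1 c)
    (hcβ : ∀ x y, ‖fderiv ℝ c x - fderiv ℝ c y‖ ≤ β * ‖x - y‖)
    (S : EuclideanSpace ℝ (Fin d) → EuclideanSpace ℝ (Fin d))
    (hS : ∀ y z, g (S y) + h (c y + fderiv ℝ c y (S y - y)) + ‖S y - y‖ ^ 2 / (2 * t) ≤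
        g z + h (c y + fderiv ℝ c y (z - y)) + ‖z - y‖ ^ 2 / (2 * t))
    (Fgrad : EuclideanSpace ℝ (Fin d) → EuclideanSpace ℝ (Fin d))
    (hgrad : ∀ w, HasGradientAt
        (fun w' => ⨅ z, (g z + h (c z) + ‖z - w'‖ ^ 2 / (2 * (t / (1 + t * (L * β))))))
        (Fgrad w) w)
    (x : EuclideanSpace ℝ (Fin d)) :
    ‖Fgrad x‖ ≤ (1 + (L * β) * t) * (1 + Real.sqrt ((L * β) * t)) * ‖t⁻¹ • (x - S x)‖ := by
  have hμ0 : (0:ℝ) ≤ L * β := mul_nonneg hL hβ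
  have h1tμ : (0:ℝ) < 1 + t * (L * β) := by nlinarith
  have hup : ∀ u v, h u ≤ h v + L * ‖u - v‖ := by
    intro u v
    have := (abs_le.1 (hhL u v)).2
    linarith
  obtain ⟨xh, hxh⟩ : ∃ xh, xh = S x := ⟨_, rfl⟩
  obtain ⟨A, hA⟩ : ∃ A : EuclideanSpace ℝ (Fin d) →L[ℝ] EuclideanSpace ℝ (Fin m),
      A = fderiv ℝ c x := ⟨_, rfl⟩
  -- quadratic approximation of h ∘ c by the linearized model
  have happrox : ∀ z, |h (c z) - h (c x + A (z - x))| ≤ (L * β) / 2 * ‖z - x‖ ^ 2 := by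
    intro z
    have htay : ‖c z - c x - fderiv ℝ c x (z - x)‖ ≤ β / 2 * ‖z - x‖ ^ 2 :=
      taylor_quadratic hc hcβ x z
    have h1 : |h (c z) - h (c x + A (z - x))| ≤ L * ‖c z - (c x + A (z - x))‖ := hhL _ _
    have h2 : c z - (c x + A (z - x)) = c z - c x - fderiv ℝ c x (z - x) := by
      rw [hA]; abel
    rw [h2] at h1
    calc |h (c z) - h (c x + A (z - x))| ≤ L * ‖c z - c x - fderiv ℝ c x (z - x)‖ := h1
      _ ≤ L * (β / 2 * ‖z - x‖ ^ 2) := mul_le_mul_of_nonneg_left htay hL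
      _ = (L * β) / 2 * ‖z - x‖ ^ 2 := by ring
  -- the model function and its strong minimality at `xh`
  obtain ⟨model, hmodel⟩ : ∃ f : EuclideanSpace ℝ (Fin d) → ℝ,
      f = fun z => g z + h (c x + A (z - x)) + ‖z - x‖ ^ 2 / (2 * t) := ⟨_, rfl⟩
  have hmodel' : ∀ z, model z = g z + h (c x + A (z - x)) + ‖z - x‖ ^ 2 / (2 * t) := by
    intro z; rw [hmodel]
  have hmodelmin : ∀ z, model xh ≤ model z := by
    intro z
    rw [hmodel' z, hmodel' xh, hxh, hA]
    exact hS x z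
  have hcombo : ∀ (a b : ℝ), a + b = 1 → ∀ u v : EuclideanSpace ℝ (Fin d),
      a • u + b • v - x = a • (u - x) + b • (v - x) := by
    intro a b hab u v
    match_scalars <;> linarith
  have he1 : ∀ (a b : ℝ), 0 ≤ a → 0 ≤ b → a + b = 1 → ∀ u v : EuclideanSpace ℝ (Fin d),
      ‖a • u + b • v - x‖ ^ 2 = a * ‖u - x‖ ^ 2 + b * ‖v - x‖ ^ 2 - a * b * ‖u - v‖ ^ 2 := by
    intro a b ha hb hab u v
    have := norm_combo_sq a b hab (u - x) (v - x)
    rw [← hcombo a b hab u v] at this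
    rw [this]
    have : u - x - (v - x) = u - v := by abel
    rw [this]
  have haff : ∀ (a b : ℝ), a + b = 1 → ∀ u v : EuclideanSpace ℝ (Fin d),
      c x + A (a • u + b • v - x) = a • (c x + A (u - x)) + b • (c x + A (v - x)) := by
    intro a b hab u v
    rw [hcombo a b hab u v, map_add, map_smul, map_smul]
    match_scalars <;> linarith
  have hmodelconv : ConvexOn ℝ Set.univ (fun z => model z - (1 / t) / 2 * ‖z‖ ^ 2) := by
    refine ⟨convex_univ, fun u _ v _ a b ha hb hab => ?_⟩
    simp only [smul_eq_mul, hmodel']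
    have hgcomb : g (a • u + b • v) ≤ a * g u + b * g v := by
      have := hg.2 (Set.mem_univ u) (Set.mem_univ v) ha hb hab
      simpa using this
    have hhcomb : h (c x + A (a • u + b • v - x))
        ≤ a * h (c x + A (u - x)) + b * h (c x + A (v - x)) := by
      rw [haff a b hab u v]
      have := hh.2 (Set.mem_univ (c x + A (u - x))) (Set.mem_univ (c x + A (v - x))) ha hb hab
      simpa using this
    have e1 := he1 a b ha hb hab u v
    have e2 := norm_combo_sq a b hab u v
    have e1' : ‖a • u + b • v - x‖ ^ 2 / (2 * t)
        = a * (‖u - x‖ ^ 2 / (2 * t)) + b * (‖v - x‖ ^ 2 / (2 * t))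
          - a * b * ‖u - v‖ ^ 2 / (2 * t) := by rw [e1]; ring
    have e2' : (1 / t) / 2 * ‖a • u + b • v‖ ^ 2
        = a * ((1 / t) / 2 * ‖u‖ ^ 2) + b * ((1 / t) / 2 * ‖v‖ ^ 2)
          - a * b * ‖u - v‖ ^ 2 / (2 * t) := by rw [e2]; ring
    linarith
  have hmodelstrong : ∀ z, model xh + (1 / t) / 2 * ‖z - xh‖ ^ 2 ≤ model z :=
    strong_min (by positivity) hmodelconv hmodelmin
  -- the proximal objective Ψ at base point x
  obtain ⟨Ψ, hΨ⟩ : ∃ f : EuclideanSpace ℝ (Fin d) → ℝ,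
      f = fun z => g z + h (c z) + ‖z - x‖ ^ 2 / (2 * t) + (L * β) / 2 * ‖z - x‖ ^ 2 :=
    ⟨_, rfl⟩
  have hΨ' : ∀ z, Ψ z = g z + h (c z) + ‖z - x‖ ^ 2 / (2 * t) + (L * β) / 2 * ‖z - x‖ ^ 2 := by
    intro z; rw [hΨ]
  have hQ : ∀ (z w : EuclideanSpace ℝ (Fin d)),
      ‖z - w‖ ^ 2 / (2 * (t / (1 + t * (L * β)))) =
        ‖z - w‖ ^ 2 / (2 * t) + (L * β) / 2 * ‖z - w‖ ^ 2 := by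
    intro z w
    rw [div_eq_iff (by positivity)]
    field_simp
  have hΨlower : ∀ z, model z ≤ Ψ z := by
    intro z
    have := (abs_le.1 (happrox z)).1
    rw [hmodel' z, hΨ' z]
    linarith
  have hΨlower' : ∀ z, model xh + (1 / t) / 2 * ‖z - xh‖ ^ 2 ≤ Ψ z :=
    fun z => (hmodelstrong z).trans (hΨlower z)
  -- existence of the proximal point
  obtain ⟨xb, hxbmin⟩ : ∃ xb, ∀ z, Ψ xb ≤ Ψ z := by
    have hhcont : Continuous h := by
      have hlip : LipschitzWith (Real.toNNReal L) h := by
        apply LipschitzWith.of_dist_le_mul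
        intro u v
        rw [Real.dist_eq, dist_eq_norm]
        calc |h u - h v| ≤ L * ‖u - v‖ := hhL u v
          _ = (Real.toNNReal L : ℝ) * ‖u - v‖ := by rw [Real.coe_toNNReal L hL]
      exact hlip.continuous
    have hΨlsc : LowerSemicontinuous Ψ := by
      rw [hΨ]
      have h1 : Continuous (fun z : EuclideanSpace ℝ (Fin d) =>
          h (c z) + ‖z - x‖ ^ 2 / (2 * t) + (L * β) / 2 * ‖z - x‖ ^ 2) := by
        apply Continuous.add
        apply Continuous.add
        · exact hhcont.comp hc.continuous
        · exact ((continuous_id.sub continuous_const).norm.pow 2).div_const _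
        · exact continuous_const.mul ((continuous_id.sub continuous_const).norm.pow 2)
      have h2 : LowerSemicontinuous (fun z : EuclideanSpace ℝ (Fin d) =>
          g z + (h (c z) + ‖z - x‖ ^ 2 / (2 * t) + (L * β) / 2 * ‖z - x‖ ^ 2)) :=
        hgc.add h1.lowerSemicontinuous
      convert h2 using 2 with z
      ring
    obtain ⟨R, hR⟩ : ∃ R : ℝ, R = Real.sqrt (2 * t * (Ψ xh - model xh)) + 1 := ⟨_, rfl⟩
    have hMV : model xh ≤ Ψ xh := by
      have := hΨlower' xh
      simp only [sub_self, norm_zero] at this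
      linarith
    have hR0 : 0 < R := by rw [hR]; positivity
    obtain ⟨x₀, hx₀mem, hx₀min⟩ :=
      lsc_exists_min hΨlsc (isCompact_closedBall xh R)
        ⟨xh, Metric.mem_closedBall_self hR0.le⟩
    refine ⟨x₀, fun z => ?_⟩
    by_cases hz : z ∈ Metric.closedBall xh R
    · exact hx₀min z hz
    · have hd : R < ‖z - xh‖ := by
        rw [Metric.mem_closedBall, not_le, dist_eq_norm] at hz
        exact hz
      have hlow := hΨlower' z
      have hsq : Real.sqrt (2 * t * (Ψ xh - model xh)) ^ 2 = 2 * t * (Ψ xh - model xh) :=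
        Real.sq_sqrt (by nlinarith)
      have hx₀xh := hx₀min xh (Metric.mem_closedBall_self hR0.le)
      have hRz : R ^ 2 < ‖z - xh‖ ^ 2 := by nlinarith [norm_nonneg (z - xh)]
      have hR2 : 2 * t * (Ψ xh - model xh) + 1 ≤ R ^ 2 := by
        rw [hR]
        nlinarith [Real.sqrt_nonneg (2 * t * (Ψ xh - model xh))]
      have hchain : Ψ xh < Ψ z := by
        have h2t : (0:ℝ) < 2 * t := by positivity
        have hfrac : (1 / t) / 2 * (2 * t * (Ψ xh - model xh) + 1) 
            ≤ (1 / t) / 2 * ‖z - xh‖ ^ 2 := by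
          apply mul_le_mul_of_nonneg_left _ (by positivity)
          linarith
        have hexp : (1 / t) / 2 * (2 * t * (Ψ xh - model xh) + 1)
            = (Ψ xh - model xh) + 1 / (2 * t) := by field_simp
        rw [hexp] at hfrac
        have : 0 < 1 / (2 * t) := by positivity
        linarith
      linarith
  have hΨconv : ConvexOn ℝ Set.univ (fun z => Ψ z - (1 / t) / 2 * ‖z‖ ^ 2) := by
    refine ⟨convex_univ, fun u _ v _ a b ha hb hab => ?_⟩
    simp only [smul_eq_mul, hΨ']
    have hgcomb : g (a • u + b • v) ≤ a * g u + b * g v := by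
      have := hg.2 (Set.mem_univ u) (Set.mem_univ v) ha hb hab
      simpa using this
    have hccomb : h (c (a • u + b • v))
        ≤ a * h (c u) + b * h (c v) + L * (β / 2 * (a * b) * ‖u - v‖ ^ 2) := by
      have hc1 : h (c (a • u + b • v)) ≤ h (a • c u + b • c v)
          + L * ‖c (a • u + b • v) - (a • c u + b • c v)‖ := hup _ _
      have hc2 : ‖c (a • u + b • v) - (a • c u + b • c v)‖
          = ‖a • c u + b • c v - c (a • u + b • v)‖ := norm_sub_rev _ _
      have hc3 := c_combo hc hcβ ha hb hab u v
      have hc4 : h (a • c u + b • c v) ≤ a * h (c u) + b * h (c v) := by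
        have := hh.2 (Set.mem_univ (c u)) (Set.mem_univ (c v)) ha hb hab
        simpa using this
      have hc5 : L * ‖c (a • u + b • v) - (a • c u + b • c v)‖
          ≤ L * (β / 2 * (a * b) * ‖u - v‖ ^ 2) := by
        rw [hc2]
        exact mul_le_mul_of_nonneg_left hc3 hL
      linarith
    have e1 := he1 a b ha hb hab u v
    have e2 := norm_combo_sq a b hab u v
    have e1' : ‖a • u + b • v - x‖ ^ 2 / (2 * t)
        = a * (‖u - x‖ ^ 2 / (2 * t)) + b * (‖v - x‖ ^ 2 / (2 * t))
          - a * b * ‖u - v‖ ^ 2 / (2 * t) := by rw [e1]; ring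
    have e1'' : (L * β) / 2 * ‖a • u + b • v - x‖ ^ 2
        = a * ((L * β) / 2 * ‖u - x‖ ^ 2) + b * ((L * β) / 2 * ‖v - x‖ ^ 2)
          - L * (β / 2 * (a * b) * ‖u - v‖ ^ 2) := by rw [e1]; ring
    have e2' : (1 / t) / 2 * ‖a • u + b • v‖ ^ 2
        = a * ((1 / t) / 2 * ‖u‖ ^ 2) + b * ((1 / t) / 2 * ‖v‖ ^ 2)
          - a * b * ‖u - v‖ ^ 2 / (2 * t) := by rw [e2]; ring
    linarith
  have hΨstrong : ∀ z, Ψ xb + (1 / t) / 2 * ‖z - xb‖ ^ 2 ≤ Ψ z :=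
    strong_min (by positivity) hΨconv hxbmin
  -- key distance estimate
  have hdistsq : ‖xh - xb‖ ^ 2 ≤ (L * β) * t * ‖xh - x‖ ^ 2 := by
    have e1 : Ψ xb + (1 / t) / 2 * ‖xh - xb‖ ^ 2 ≤ Ψ xh := hΨstrong xh
    have e2 : model xh + (1 / t) / 2 * ‖xb - xh‖ ^ 2 ≤ model xb := hmodelstrong xb
    have e3 : Ψ xh ≤ model xh + (L * β) * ‖xh - x‖ ^ 2 := by
      have := (abs_le.1 (happrox xh)).2
      rw [hmodel' xh, hΨ' xh]
      linarith
    have e4 : model xb ≤ Ψ xb := hΨlower xb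
    have e5 : ‖xb - xh‖ = ‖xh - xb‖ := norm_sub_rev _ _
    rw [e5] at e2
    have e6 : (1 / t) * ‖xh - xb‖ ^ 2 ≤ (L * β) * ‖xh - x‖ ^ 2 := by linarith
    have e7 := mul_le_mul_of_nonneg_left e6 ht.le
    calc ‖xh - xb‖ ^ 2 = t * ((1 / t) * ‖xh - xb‖ ^ 2) := by field_simp
      _ ≤ t * ((L * β) * ‖xh - x‖ ^ 2) := e7
      _ = (L * β) * t * ‖xh - x‖ ^ 2 := by ring
  have hdist : ‖xh - xb‖ ≤ Real.sqrt ((L * β) * t) * ‖xh - x‖ := by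
    have h1 : ‖xh - xb‖ = Real.sqrt (‖xh - xb‖ ^ 2) := by
      rw [Real.sqrt_sq (norm_nonneg _)]
    rw [h1]
    calc Real.sqrt (‖xh - xb‖ ^ 2) ≤ Real.sqrt ((L * β) * t * ‖xh - x‖ ^ 2) :=
          Real.sqrt_le_sqrt hdistsq
      _ = Real.sqrt ((L * β) * t) * ‖xh - x‖ := by
          rw [Real.sqrt_mul (by positivity), Real.sqrt_sq (norm_nonneg _)]
  -- the Moreau envelope
  obtain ⟨φ, hφ⟩ : ∃ f : EuclideanSpace ℝ (Fin d) → ℝ,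
      f = fun w' => ⨅ z, (g z + h (c z) + ‖z - w'‖ ^ 2 / (2 * (t / (1 + t * (L * β))))) :=
    ⟨_, rfl⟩
  have hbdd : ∀ y : EuclideanSpace ℝ (Fin d),
      BddBelow (Set.range fun z => g z + h (c z) + ‖z - y‖ ^ 2 / (2 * (t / (1 + t * (L * β))))) := by
    intro y
    obtain ⟨K, hK⟩ : ∃ K : ℝ, K = (1 + t * (L * β)) / (2 * t) := ⟨_, rfl⟩
    have hK0 : 0 < K := by rw [hK]; positivity
    obtain ⟨a', ha'⟩ : ∃ a' : ℝ, a' = 2 * K * ‖x - y‖ := ⟨_, rfl⟩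
    have ha'0 : 0 ≤ a' := by rw [ha']; positivity
    refine ⟨model xh - a' ^ 2 * t / 2 - a' * ‖xh‖ + K * (‖y‖ ^ 2 - ‖x‖ ^ 2), ?_⟩
    rintro w ⟨z, rfl⟩
    dsimp only
    have hbody : g z + h (c z) + ‖z - y‖ ^ 2 / (2 * (t / (1 + t * (L * β))))
        = Ψ z + K * (‖z - y‖ ^ 2 - ‖z - x‖ ^ 2) := by
      rw [hQ z y, hΨ' z, hK]
      field_simp
      ring
    have hdiff : ‖z - y‖ ^ 2 - ‖z - x‖ ^ 2 = 2 * ⟪z, x - y⟫ + ‖y‖ ^ 2 - ‖x‖ ^ 2 := by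
      rw [norm_sub_sq_real z y, norm_sub_sq_real z x, inner_sub_right]
      ring
    have hinner : -(‖z‖ * ‖x - y‖) ≤ ⟪z, x - y⟫ :=
      neg_le_of_abs_le (abs_real_inner_le_norm z (x - y))
    have hnz : ‖z‖ ≤ ‖z - xh‖ + ‖xh‖ := by
      calc ‖z‖ = ‖(z - xh) + xh‖ := by rw [sub_add_cancel]
        _ ≤ ‖z - xh‖ + ‖xh‖ := norm_add_le _ _
    have hΨz := hΨlower' z
    -- (1/(2t)) r² - a' r + a'² t/2 ≥ 0
    have hquad : 0 ≤ (1 / t) / 2 * ‖z - xh‖ ^ 2 - a' * ‖z - xh‖ + a' ^ 2 * t / 2 := by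
      have hsq := sq_nonneg (‖z - xh‖ - a' * t)
      have := mul_nonneg (by positivity : (0:ℝ) ≤ 1 / (2 * t)) hsq
      calc (0:ℝ) ≤ 1 / (2 * t) * (‖z - xh‖ - a' * t) ^ 2 := this
        _ = (1 / t) / 2 * ‖z - xh‖ ^ 2 - a' * ‖z - xh‖ + a' ^ 2 * t / 2 := by
            field_simp
            ring
    -- lower bound for the inner-product term
    have hK' : K * (2 * ⟪z, x - y⟫ + ‖y‖ ^ 2 - ‖x‖ ^ 2)
        ≥ K * (-(2 * (‖z - xh‖ + ‖xh‖) * ‖x - y‖) + ‖y‖ ^ 2 - ‖x‖ ^ 2) := by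
      apply mul_le_mul_of_nonneg_left _ hK0.le
      have h1 : -((‖z - xh‖ + ‖xh‖) * ‖x - y‖) ≤ ⟪z, x - y⟫ := by
        have h2 : ‖z‖ * ‖x - y‖ ≤ (‖z - xh‖ + ‖xh‖) * ‖x - y‖ :=
          mul_le_mul_of_nonneg_right hnz (norm_nonneg _)
        linarith
      linarith
    rw [hbody, hdiff]
    have hexpand : K * (-(2 * (‖z - xh‖ + ‖xh‖) * ‖x - y‖) + ‖y‖ ^ 2 - ‖x‖ ^ 2)
        = -(a' * ‖z - xh‖) - a' * ‖xh‖ + K * (‖y‖ ^ 2 - ‖x‖ ^ 2) := by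
      rw [ha']
      ring
    rw [hexpand] at hK'
    linarith
  have hψΨ : ∀ z, g z + h (c z) + ‖z - x‖ ^ 2 / (2 * (t / (1 + t * (L * β)))) = Ψ z := by
    intro z; rw [hQ, hΨ' z]; ring
  have hφx : φ x = Ψ xb := by
    rw [hφ]
    refine le_antisymm ?_ ?_
    · exact (ciInf_le (hbdd x) xb).trans (le_of_eq (hψΨ xb))
    · exact le_ciInf fun z => by rw [hψΨ z]; exact hxbmin z
  have hφy : ∀ y, φ y ≤ g xb + h (c xb) + ‖xb - y‖ ^ 2 / (2 * (t / (1 + t * (L * β)))) := by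
    intro y
    rw [hφ]
    exact ciInf_le (hbdd y) xb
  have hupper : ∀ y, φ y ≤ φ x + ((1 + t * (L * β)) / t) * ⟪x - xb, y - x⟫
      + ((1 + t * (L * β)) / (2 * t)) * ‖y - x‖ ^ 2 := by
    intro y
    have hΨxb : Ψ xb = g xb + h (c xb) + ‖xb - x‖ ^ 2 / (2 * (t / (1 + t * (L * β)))) :=
      (hψΨ xb).symm
    have hE1 : φ y ≤ φ x + (‖xb - y‖ ^ 2 - ‖xb - x‖ ^ 2) * ((1 + t * (L * β)) / (2 * t)) := by
      have h1 := hφy y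
      have hconv : ∀ r : ℝ, r / (2 * (t / (1 + t * (L * β)))) = r * ((1 + t * (L * β)) / (2 * t)) := by
        intro r
        rw [div_eq_iff (by positivity)]
        field_simp
      rw [hconv] at h1
      have h2 : φ x = g xb + h (c xb) + ‖xb - x‖ ^ 2 * ((1 + t * (L * β)) / (2 * t)) := by
        rw [hφx, hΨxb, hconv]
      linarith [h1, h2]
    have hE2 : ‖xb - y‖ ^ 2 = ‖xb - x‖ ^ 2 - 2 * ⟪xb - x, y - x⟫ + ‖y - x‖ ^ 2 := by
      have h0 : xb - y = (xb - x) - (y - x) := by abel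
      rw [h0, norm_sub_sq_real]
    have hE3 : (⟪x - xb, y - x⟫ : ℝ) = -⟪xb - x, y - x⟫ := by
      have h0 : x - xb = -(xb - x) := by abel
      rw [h0, inner_neg_left]
    rw [hE2] at hE1
    rw [hE3]
    have hexp : φ x + (‖xb - x‖ ^ 2 - 2 * ⟪xb - x, y - x⟫ + ‖y - x‖ ^ 2 - ‖xb - x‖ ^ 2)
          * ((1 + t * (L * β)) / (2 * t))
        = φ x + ((1 + t * (L * β)) / t) * (-⟪xb - x, y - x⟫)
          + ((1 + t * (L * β)) / (2 * t)) * ‖y - x‖ ^ 2 := by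
      field_simp
      ring
    rw [hexp] at hE1
    exact hE1
  have hFgrad : Fgrad x = ((1 + t * (L * β)) / t) • (x - xb) := by
    obtain ⟨u, hu⟩ : ∃ u, u = Fgrad x - ((1 + t * (L * β)) / t) • (x - xb) := ⟨_, rfl⟩
    obtain ⟨ρ, hρ⟩ : ∃ ρ : ℝ → ℝ, ρ = fun s : ℝ =>
        φ (x + s • u) - φ x - s * (((1 + t * (L * β)) / t) * ⟪x - xb, u⟫)
          - ((1 + t * (L * β)) / (2 * t)) * s ^ 2 * ‖u‖ ^ 2 := ⟨_, rfl⟩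
    have hρ' : ∀ s, ρ s = φ (x + s • u) - φ x - s * (((1 + t * (L * β)) / t) * ⟪x - xb, u⟫)
          - ((1 + t * (L * β)) / (2 * t)) * s ^ 2 * ‖u‖ ^ 2 := fun s => by rw [hρ]
    have hρ0 : ρ 0 = 0 := by rw [hρ']; simp
    have hρle : ∀ s, ρ s ≤ 0 := by
      intro s
      have h1 := hupper (x + s • u)
      have h2 : x + s • u - x = s • u := by abel
      rw [h2] at h1
      rw [real_inner_smul_right] at h1
      have h3 : ‖s • u‖ ^ 2 = s ^ 2 * ‖u‖ ^ 2 := by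
        rw [norm_smul, Real.norm_eq_abs, mul_pow, sq_abs]
      rw [h3] at h1
      rw [hρ']
      nlinarith [h1]
    have hlocmax : IsLocalMax ρ 0 := by
      apply Filter.Eventually.of_forall
      intro s
      rw [hρ0]
      exact hρle s
    have hgx : HasGradientAt φ (Fgrad x) x := by rw [hφ]; exact hgrad x
    have hline : HasDerivAt (fun s : ℝ => x + s • u) u 0 := by
      simpa using ((hasDerivAt_id (0:ℝ)).smul_const u).const_add x
    have hfd : HasFDerivAt φ ((InnerProductSpace.toDual ℝ _) (Fgrad x)) x :=
      hgx.hasFDerivAt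
    have hfd' : HasFDerivAt φ ((InnerProductSpace.toDual ℝ _) (Fgrad x)) (x + (0:ℝ) • u) := by
      simpa using hfd
    have hcomp : HasDerivAt (fun s : ℝ => φ (x + s • u)) (⟪Fgrad x, u⟫) 0 := by
      have := hfd'.comp_hasDerivAt 0 hline
      simp only [InnerProductSpace.toDual_apply_apply] at this
      exact this
    have hder : HasDerivAt ρ (⟪Fgrad x, u⟫ - ((1 + t * (L * β)) / t) * ⟪x - xb, u⟫) 0 := by
      rw [hρ]
      have hc1 : HasDerivAt (fun s : ℝ => φ (x + s • u) - φ x)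
          (⟪Fgrad x, u⟫) 0 := hcomp.sub_const (φ x)
      have hc2 : HasDerivAt (fun s : ℝ => s * (((1 + t * (L * β)) / t) * ⟪x - xb, u⟫))
          (((1 + t * (L * β)) / t) * ⟪x - xb, u⟫) 0 := by
        simpa using (hasDerivAt_id (0:ℝ)).mul_const (((1 + t * (L * β)) / t) * ⟪x - xb, u⟫)
      have hc3 : HasDerivAt (fun s : ℝ => ((1 + t * (L * β)) / (2 * t)) * s ^ 2 * ‖u‖ ^ 2)
          0 0 := by
        have h4 : HasDerivAt (fun s : ℝ => s ^ 2) (2 * (0:ℝ) ^ 1) 0 := hasDerivAt_pow 2 0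
        have h5 := (h4.const_mul ((1 + t * (L * β)) / (2 * t))).mul_const (‖u‖ ^ 2)
        simpa using h5
      have := (hc1.sub hc2).sub hc3
      rw [sub_zero] at this
      exact this
    have hzero := hlocmax.hasDerivAt_eq_zero hder
    have hinner : (⟪u, u⟫ : ℝ) = 0 := by
      have h6 : (⟪u, u⟫ : ℝ) = ⟪Fgrad x, u⟫ - ⟪((1 + t * (L * β)) / t) • (x - xb), u⟫ := by
        rw [← inner_sub_left, ← hu]
      rw [real_inner_smul_left] at h6
      rw [h6]
      linarith [hzero]
    have hu0 : u = 0 := by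
      rwa [inner_self_eq_zero] at hinner
    rw [← sub_eq_zero, ← hu, hu0]
  -- final computation
  have hnormF : ‖Fgrad x‖ = ((1 + t * (L * β)) / t) * ‖x - xb‖ := by
    rw [hFgrad, norm_smul, Real.norm_eq_abs, abs_of_pos (by positivity)]
  have htri : ‖x - xb‖ ≤ ‖x - xh‖ + ‖xh - xb‖ := by
    calc ‖x - xb‖ = ‖(x - xh) + (xh - xb)‖ := by rw [sub_add_sub_cancel]
      _ ≤ ‖x - xh‖ + ‖xh - xb‖ := norm_add_le _ _
  have hrev : ‖xh - x‖ = ‖x - xh‖ := norm_sub_rev _ _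
  rw [hrev] at hdist
  have hGt : ‖t⁻¹ • (x - S x)‖ = t⁻¹ * ‖x - xh‖ := by
    rw [← hxh, norm_smul, Real.norm_eq_abs, abs_of_pos (by positivity)]
  rw [hGt, hnormF]
  have hsqrt0 : 0 ≤ Real.sqrt ((L * β) * t) := Real.sqrt_nonneg _
  have hb1 : ‖x - xb‖ ≤ (1 + Real.sqrt ((L * β) * t)) * ‖x - xh‖ := by
    calc ‖x - xb‖ ≤ ‖x - xh‖ + ‖xh - xb‖ := htri
      _ ≤ ‖x - xh‖ + Real.sqrt ((L * β) * t) * ‖x - xh‖ := by linarith [hdist]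
      _ = (1 + Real.sqrt ((L * β) * t)) * ‖x - xh‖ := by ring
  calc ((1 + t * (L * β)) / t) * ‖x - xb‖
      ≤ ((1 + t * (L * β)) / t) * ((1 + Real.sqrt ((L * β) * t)) * ‖x - xh‖) :=
        mul_le_mul_of_nonneg_left hb1 (by positivity)
    _ = (1 + (L * β) * t) * (1 + Real.sqrt ((L * β) * t)) * (t⁻¹ * ‖x - xh‖) := by
        field_simp
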